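/- arXiv:1401.1627 — 5 statements merged into one kernel-verified Lean document; each statement's English description precedes it below -/
import Mathlib

section
/- Let c₁, c₂, n₁, n₂ > 0 be real numbers, m_j := n_j/c_j (j = 1,2), and r₀ ≥ 0 real. Set ρ_j := i√(r₀ + m_j) (the unique complex number with positive imaginary part satisfying ρ_j² + r₀ = m_j·(−1)) and κ(−1) := n₂/(2ρ₂) − n₁/(2ρ₁). Then Re κ(−1) = 0 and Im κ(−1) = (1/2)(n₁/√(r₀ + m₁) − n₂/√(r₀ + m₂)). If moreover (c₁ − c₂)(c₁n₁ − c₂n₂) < 0, then for every r₀ ≥ 0 the number Im κ(−1) is nonzero and has the same sign as c₁n₁ − c₂n₂ (so of constant sign, independent of r₀), and there exists a constant C > 0 depending only on c₁, c₂, n₁, n₂ such that |κ(−1)| ≥ C(1 + r₀)^{−1/2} for all r₀ ≥ 0. -/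
lemma kappa_form (n₁ n₂ s₁ s₂ : ℝ) (h1 : s₁ ≠ 0) (h2 : s₂ ≠ 0) :
    (n₂ : ℂ) / (2 * (Complex.I * (s₂:ℝ))) - (n₁ : ℂ) / (2 * (Complex.I * (s₁:ℝ)))
      = Complex.I * ((1/2*(n₁/s₁ - n₂/s₂) : ℝ) : ℂ) := by
  have h1' : (s₁ : ℂ) ≠ 0 := by exact_mod_cast h1
  have h2' : (s₂ : ℂ) ≠ 0 := by exact_mod_cast h2
  have hI := Complex.I_ne_zero
  push_cast
  field_simp
  linear_combination ((n₂:ℂ)*s₁ - s₂*n₁)*Complex.I_sq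

lemma sign_aux (n₁ n₂ s₁ s₂ e : ℝ) (hs₁ : 0 < s₁) (hs₂ : 0 < s₂)
    (hn₁ : 0 < n₁) (hn₂ : 0 < n₂)
    (hD : 0 < (n₁^2*s₂^2 - n₂^2*s₁^2)*e) : 0 < (1/2*(n₁/s₁ - n₂/s₂))*e := by
  have hsum : 0 < n₁*s₂ + n₂*s₁ := by positivity
  have h1 : (n₁*s₂ - n₂*s₁)*e = ((n₁^2*s₂^2 - n₂^2*s₁^2)*e)/(n₁*s₂ + n₂*s₁) := by
    rw [eq_div_iff hsum.ne']; ring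
  have h2 : 0 < (n₁*s₂ - n₂*s₁)*e := by rw [h1]; exact div_pos hD hsum
  have h3 : (1/2*(n₁/s₁ - n₂/s₂))*e = (1/2)*((n₁*s₂ - n₂*s₁)*e)/(s₁*s₂) := by
    rw [div_sub_div _ _ hs₁.ne' hs₂.ne']; ring
  rw [h3]; exact div_pos (by linarith) (by positivity)

set_option maxHeartbeats 1000000 in
/-- The computation of `κ(−1)` and the lower bound (5.34) of the paper: with
`mⱼ = nⱼ/cⱼ`, `ρⱼ = i√(r₀ + mⱼ)` (the unique root with positive imaginary part of
`ρ² + r₀ = mⱼ·(−1)`) and `κ(−1) = n₂/(2ρ₂) − n₁/(2ρ₁)`, one has `Re κ(−1) = 0` and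
`Im κ(−1) = (1/2)(n₁/√(r₀+m₁) − n₂/√(r₀+m₂))`; if moreover `(c₁−c₂)(c₁n₁−c₂n₂) < 0`,
then `Im κ(−1)` is nonzero of the sign of `c₁n₁ − c₂n₂` for every `r₀ ≥ 0`, and there is
`C > 0` depending only on `c₁, c₂, n₁, n₂` with `|κ(−1)| ≥ C (1+r₀)^{−1/2}` for all `r₀ ≥ 0`. -/
theorem stmt_14 (c₁ c₂ n₁ n₂ : ℝ) (hc₁ : 0 < c₁) (hc₂ : 0 < c₂) (hn₁ : 0 < n₁) (hn₂ : 0 < n₂) :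
    let m₁ : ℝ := n₁ / c₁
    let m₂ : ℝ := n₂ / c₂
    let ρ₁ : ℝ → ℂ := fun r₀ => Complex.I * (Real.sqrt (r₀ + m₁) : ℝ)
    let ρ₂ : ℝ → ℂ := fun r₀ => Complex.I * (Real.sqrt (r₀ + m₂) : ℝ)
    let κ : ℝ → ℂ := fun r₀ => (n₂ : ℂ) / (2 * ρ₂ r₀) - (n₁ : ℂ) / (2 * ρ₁ r₀)
    (∀ r₀ : ℝ, 0 ≤ r₀ →
      (0 < (ρ₁ r₀).im ∧ (ρ₁ r₀) ^ 2 + (r₀ : ℂ) = (m₁ : ℂ) * (-1) ∧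
        0 < (ρ₂ r₀).im ∧ (ρ₂ r₀) ^ 2 + (r₀ : ℂ) = (m₂ : ℂ) * (-1)) ∧
      (κ r₀).re = 0 ∧
      (κ r₀).im = (1 / 2) * (n₁ / Real.sqrt (r₀ + m₁) - n₂ / Real.sqrt (r₀ + m₂))) ∧
    ((c₁ - c₂) * (c₁ * n₁ - c₂ * n₂) < 0 →
      (∀ r₀ : ℝ, 0 ≤ r₀ → (κ r₀).im ≠ 0 ∧ 0 < (κ r₀).im * (c₁ * n₁ - c₂ * n₂)) ∧
      ∃ C : ℝ, 0 < C ∧ ∀ r₀ : ℝ, 0 ≤ r₀ →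
        C * (1 + r₀) ^ (-(1 : ℝ) / 2) ≤ ‖κ r₀‖) := by
  intro m₁ m₂ ρ₁ ρ₂ κ
  have hm₁ : 0 < m₁ := div_pos hn₁ hc₁
  have hm₂ : 0 < m₂ := div_pos hn₂ hc₂
  have key : ∀ r : ℝ, 0 ≤ r →
      κ r = Complex.I * ((1/2*(n₁/Real.sqrt (r+m₁) - n₂/Real.sqrt (r+m₂)) : ℝ) : ℂ) := by
    intro r hr
    have hs₁ : 0 < Real.sqrt (r+m₁) := Real.sqrt_pos.2 (by linarith)
    have hs₂ : 0 < Real.sqrt (r+m₂) := Real.sqrt_pos.2 (by linarith)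
    exact kappa_form n₁ n₂ _ _ hs₁.ne' hs₂.ne'
  have hre : ∀ r : ℝ, 0 ≤ r → (κ r).re = 0 := by
    intro r hr; rw [key r hr]; simp
  have him : ∀ r : ℝ, 0 ≤ r →
      (κ r).im = 1/2*(n₁/Real.sqrt (r+m₁) - n₂/Real.sqrt (r+m₂)) := by
    intro r hr; rw [key r hr]; simp
  constructor
  · intro r hr
    have hs₁ : 0 < Real.sqrt (r+m₁) := Real.sqrt_pos.2 (by linarith)
    have hs₂ : 0 < Real.sqrt (r+m₂) := Real.sqrt_pos.2 (by linarith)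
    have hsq₁ : (Real.sqrt (r+m₁))^2 = r+m₁ := Real.sq_sqrt (by linarith)
    have hsq₂ : (Real.sqrt (r+m₂))^2 = r+m₂ := Real.sq_sqrt (by linarith)
    refine ⟨⟨by simpa [ρ₁] using hs₁, ?_, by simpa [ρ₂] using hs₂, ?_⟩, hre r hr, him r hr⟩
    · show (Complex.I * (Real.sqrt (r+m₁) : ℝ))^2 + (r:ℂ) = (m₁:ℂ)*(-1)
      have : ((Real.sqrt (r+m₁) : ℝ) : ℂ)^2 = (r:ℂ) + (m₁:ℂ) := by
        rw [← Complex.ofReal_pow, hsq₁]; push_cast; ring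
      rw [mul_pow, Complex.I_sq, this]; ring
    · show (Complex.I * (Real.sqrt (r+m₂) : ℝ))^2 + (r:ℂ) = (m₂:ℂ)*(-1)
      have : ((Real.sqrt (r+m₂) : ℝ) : ℂ)^2 = (r:ℂ) + (m₂:ℂ) := by
        rw [← Complex.ofReal_pow, hsq₂]; push_cast; ring
      rw [mul_pow, Complex.I_sq, this]; ring
  · intro hcond
    have he' : c₁*n₁ - c₂*n₂ ≠ 0 := by
      intro h; rw [h, mul_zero] at hcond; exact lt_irrefl 0 hcond
    have he2' : 0 < (c₁*n₁ - c₂*n₂)^2 := by positivity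
    have hdiff' : 0 < (n₁ - n₂)*(c₁*n₁ - c₂*n₂) := by nlinarith
    have hA' : 0 < (n₁^2 - n₂^2)*(c₁*n₁ - c₂*n₂) := by nlinarith
    set e : ℝ := c₁*n₁ - c₂*n₂ with he_def
    have he : e ≠ 0 := he'
    have he2 : 0 < e^2 := he2'
    have hA : 0 < (n₁^2 - n₂^2)*e := hA'
    set A : ℝ := (n₁^2 - n₂^2)*e with hA_def
    set B : ℝ := n₁*n₂*e^2/(c₁*c₂) with hB_def
    have hB : 0 < B := by positivity
    -- key identity:  D·e = r·A + B  where  D = n₁²(r+m₂) − n₂²(r+m₁)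
    have hDe : ∀ r : ℝ, (n₁^2*(r+m₂) - n₂^2*(r+m₁))*e = r*A + B := by
      intro r
      simp only [hA_def, hB_def, he_def, m₁, m₂]
      field_simp
      ring
    have hsign : ∀ r : ℝ, 0 ≤ r → 0 < (κ r).im * e := by
      intro r hr
      have hs₁ : 0 < Real.sqrt (r+m₁) := Real.sqrt_pos.2 (by linarith)
      have hs₂ : 0 < Real.sqrt (r+m₂) := Real.sqrt_pos.2 (by linarith)
      have hsq₁ : (Real.sqrt (r+m₁))^2 = r+m₁ := Real.sq_sqrt (by linarith)
      have hsq₂ : (Real.sqrt (r+m₂))^2 = r+m₂ := Real.sq_sqrt (by linarith)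
      rw [him r hr]
      refine sign_aux n₁ n₂ _ _ e hs₁ hs₂ hn₁ hn₂ ?_
      rw [hsq₁, hsq₂, hDe r]
      nlinarith
    refine ⟨fun r hr => ⟨fun h => by simpa [h] using hsign r hr, hsign r hr⟩, ?_⟩
    -- lower bound
    set M : ℝ := max (max m₁ m₂) 1 with hM_def
    have hM1 : (1:ℝ) ≤ M := le_max_right _ _
    have hM : 0 < M := lt_of_lt_of_le one_pos hM1
    have hMm₁ : m₁ ≤ M := le_trans (le_max_left _ _) (le_max_left _ _)
    have hMm₂ : m₂ ≤ M := le_trans (le_max_right _ _) (le_max_left _ _)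
    have hmin : 0 < min A B := lt_min hA hB
    have hepos : 0 < |e| := abs_pos.2 he
    refine ⟨min A B / (2*M*Real.sqrt M*(n₁+n₂)*|e|), by positivity, ?_⟩
    intro r hr
    have hs₁ : 0 < Real.sqrt (r+m₁) := Real.sqrt_pos.2 (by linarith)
    have hs₂ : 0 < Real.sqrt (r+m₂) := Real.sqrt_pos.2 (by linarith)
    have hsq₁ : (Real.sqrt (r+m₁))^2 = r+m₁ := Real.sq_sqrt (by linarith)
    have hsq₂ : (Real.sqrt (r+m₂))^2 = r+m₂ := Real.sq_sqrt (by linarith)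
    set s₁ := Real.sqrt (r+m₁)
    set s₂ := Real.sqrt (r+m₂)
    set b := Real.sqrt (1+r) with hb_def
    have hb : 0 < b := Real.sqrt_pos.2 (by linarith)
    have hbsq : b^2 = 1+r := Real.sq_sqrt (by linarith)
    set a := Real.sqrt M with ha_def
    have ha : 0 < a := Real.sqrt_pos.2 hM
    have hasq : a^2 = M := Real.sq_sqrt hM.le
    -- sⱼ ≤ a*b
    have hs₁le : s₁ ≤ a*b := by
      rw [ha_def, hb_def, ← Real.sqrt_mul hM.le]
      exact Real.sqrt_le_sqrt (by nlinarith)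
    have hs₂le : s₂ ≤ a*b := by
      rw [ha_def, hb_def, ← Real.sqrt_mul hM.le]
      exact Real.sqrt_le_sqrt (by nlinarith)
    -- im·e as a quotient
    have himq : (κ r).im * e
        = ((n₁^2*s₂^2 - n₂^2*s₁^2)*e) / (2*(s₁*s₂*(n₁*s₂+n₂*s₁))) := by
      rw [him r hr]
      field_simp
      ring
    have hden_pos : 0 < 2*(s₁*s₂*(n₁*s₂+n₂*s₁)) := by positivity
    have hden : 2*(s₁*s₂*(n₁*s₂+n₂*s₁)) ≤ 2*M*(1+r)*(n₁+n₂)*a*b := by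
      calc 2*(s₁*s₂*(n₁*s₂+n₂*s₁))
          ≤ 2*((a*b)*(a*b)*(n₁*(a*b)+n₂*(a*b))) := by
            gcongr <;> positivity
        _ = 2*M*(1+r)*(n₁+n₂)*a*b := by
            linear_combination (2*(n₁+n₂)*a*b*b^2)*hasq + (2*(n₁+n₂)*a*b*M)*hbsq
    have hnum : min A B * (1+r) ≤ (n₁^2*s₂^2 - n₂^2*s₁^2)*e := by
      rw [hsq₁, hsq₂, hDe r]
      nlinarith [min_le_left A B, min_le_right A B]
    have hnum_pos : (0:ℝ) ≤ (n₁^2*s₂^2 - n₂^2*s₁^2)*e :=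
      le_trans (by positivity) hnum
    have h1 : min A B * (1+r) / (2*M*(1+r)*(n₁+n₂)*a*b) ≤ (κ r).im * e := by
      rw [himq]
      exact div_le_div₀ hnum_pos hnum hden_pos hden
    have hcancel : min A B * (1+r) / (2*M*(1+r)*(n₁+n₂)*a*b)
        = min A B / (2*M*(n₁+n₂)*a*b) := by
      rw [show 2*M*(1+r)*(n₁+n₂)*a*b = (2*M*(n₁+n₂)*a*b)*(1+r) by ring,
        show min A B * (1+r) = min A B * (1+r) from rfl]
      rw [mul_div_mul_right _ _ (by linarith : (1:ℝ)+r ≠ 0)]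
    rw [hcancel] at h1
    -- |κ| = |im| = (im·e)/|e|
    have habs : ‖κ r‖ = |(κ r).im| := by
      rw [key r hr, norm_mul, Complex.norm_I, one_mul, Complex.norm_real]
      simp only [Complex.mul_im, Complex.I_re, Complex.I_im, Complex.ofReal_re,
        Complex.ofReal_im]
      norm_num
    have himabs : |(κ r).im| = ((κ r).im * e)/|e| := by
      rw [eq_div_iff hepos.ne', ← abs_mul, abs_of_pos (hsign r hr)]
    have hrpow : (1+r) ^ (-(1:ℝ)/2) = b⁻¹ := by
      rw [show (-(1:ℝ)/2) = -(1/2) by norm_num, Real.rpow_neg (by linarith),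
        hb_def, Real.sqrt_eq_rpow]
    calc min A B / (2*M*Real.sqrt M*(n₁+n₂)*|e|) * (1+r) ^ (-(1:ℝ)/2)
        = (min A B / (2*M*(n₁+n₂)*a*b)) / |e| := by
          rw [hrpow, ← ha_def, ← div_eq_mul_inv, div_div, div_div]
          ring
      _ ≤ ((κ r).im * e)/|e| := by
          exact div_le_div₀ (le_of_lt (hsign r hr)) h1 hepos le_rfl
      _ = ‖κ r‖ := by rw [habs, himabs]
end

section
/- Let c₁, c₂, n₁, n₂ > 0 be real numbers, m_j := n_j/c_j (j = 1,2), and r₀ ≥ 0 real. For each z ∈ ℂ with Re z = −1 and |Im z| ≤ 1 let ρ_j(z) be the unique complex number with Im ρ_j(z) > 0 and ρ_j(z)² + r₀ = m_j·z, and set κ(z) := n₂/(2ρ₂(z)) − n₁/(2ρ₁(z)). Then there is a constant C > 0 depending only on c₁, c₂, n₁, n₂ (and not on r₀ or z) such that |κ(z) − κ(−1)| ≤ C·|Im z|·(1 + r₀)^{−3/2} for all such z and all r₀ ≥ 0. -/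
lemma key_est (n m : ℝ) (hn : 0 < n) (hm : 0 < m) (r₀ : ℝ) (hr : 0 ≤ r₀)
    (z : ℂ) (hre : z.re = -1) (ρ : ℂ) (hρ : 0 < ρ.im)
    (heq : ρ ^ 2 + (r₀ : ℂ) = ((m : ℝ) : ℂ) * z) :
    Norm.norm ((n : ℂ) / (2 * ρ) - (n : ℂ) / (2 * (Complex.I * (Real.sqrt (r₀ + m) : ℝ)))) ≤
      (n * m / (2 * (Real.sqrt (min 1 m)) ^ 3)) * |z.im| * (1 + r₀) ^ (-(3 : ℝ) / 2) := by
  set a := Real.sqrt (r₀ + m) with ha_def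
  have haa : a ^ 2 = r₀ + m := Real.sq_sqrt (by positivity)
  have ha : 0 < a := Real.sqrt_pos.mpr (by positivity)
  set ρ₀ : ℂ := Complex.I * (a : ℂ) with hρ₀def
  have hρ₀im : ρ₀.im = a := by simp [hρ₀def]
  have hρ₀ne : ρ₀ ≠ 0 := by
    intro h; rw [h] at hρ₀im; simp at hρ₀im; linarith
  have hρne : ρ ≠ 0 := by
    intro h; rw [h] at hρ; simp at hρ
  have hsumne : ρ + ρ₀ ≠ 0 := by
    intro h
    have : (ρ + ρ₀).im = 0 := by rw [h]; simp
    simp [Complex.add_im, hρ₀im] at this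
    linarith
  have hρ₀sq : ρ₀ ^ 2 = -(((r₀ : ℂ)) + (m : ℂ)) := by
    have : ((a : ℂ)) ^ 2 = ((r₀ : ℂ)) + (m : ℂ) := by
      rw [← Complex.ofReal_pow, haa, Complex.ofReal_add]
    rw [hρ₀def]; rw [mul_pow, Complex.I_sq, this]; ring
  have h1z : 1 + z = Complex.I * (z.im : ℂ) := by
    apply Complex.ext <;> simp [hre]
  have hdiff : ρ₀ ^ 2 - ρ ^ 2 = -(m : ℂ) * (Complex.I * (z.im : ℂ)) := by
    have hρsq : ρ ^ 2 = ((m : ℝ) : ℂ) * z - (r₀ : ℂ) := by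
      rw [← heq]; ring
    rw [hρ₀sq, hρsq, ← h1z]; push_cast; ring
  have hident : (n : ℂ) / (2 * ρ) - (n : ℂ) / (2 * ρ₀)
      = (n : ℂ) * (ρ₀ ^ 2 - ρ ^ 2) / (2 * ρ * ρ₀ * (ρ + ρ₀)) := by
    field_simp
    ring
  have habsρ₀ : Norm.norm ρ₀ = a := by
    simp [hρ₀def, Complex.norm_real, abs_of_pos ha]
  have habsρ : a ≤ Norm.norm ρ := by
    have h1 : (m + r₀ : ℝ) ≤ Norm.norm (ρ ^ 2) := by
      have hρsq : ρ ^ 2 = ((m : ℝ) : ℂ) * z - (r₀ : ℂ) := by rw [← heq]; ring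
      have hre2 : (ρ ^ 2).re = -(m + r₀) := by
        rw [hρsq]; simp [Complex.sub_re, Complex.mul_re, hre]; ring
      calc (m + r₀ : ℝ) = |(ρ ^ 2).re| := by rw [hre2, abs_neg, abs_of_pos (by positivity)]
        _ ≤ Norm.norm (ρ ^ 2) := Complex.abs_re_le_norm _
    rw [norm_pow] at h1
    nlinarith [norm_nonneg ρ]
  have habssum : a ≤ Norm.norm (ρ + ρ₀) := by
    have h1 : (ρ + ρ₀).im = ρ.im + a := by simp [Complex.add_im, hρ₀im]
    calc a ≤ |(ρ + ρ₀).im| := by rw [h1, abs_of_pos (by linarith)]; linarith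
      _ ≤ Norm.norm (ρ + ρ₀) := Complex.abs_im_le_norm _
  have habsnum : Norm.norm ((n : ℂ) * (ρ₀ ^ 2 - ρ ^ 2)) = n * (m * |z.im|) := by
    rw [hdiff]
    simp [norm_mul, Complex.norm_real, abs_of_pos hn, abs_of_pos hm]
  set s := Real.sqrt (min 1 m) with hs_def
  have hs : 0 < s := Real.sqrt_pos.mpr (by positivity)
  set b := Real.sqrt (1 + r₀) with hb_def
  have hb : 0 < b := Real.sqrt_pos.mpr (by positivity)
  have hsb : s * b ≤ a := by
    rw [hs_def, hb_def, ha_def, ← Real.sqrt_mul (by positivity)]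
    apply Real.sqrt_le_sqrt
    rcases min_cases 1 m with ⟨h1, h2⟩ | ⟨h1, h2⟩ <;> rw [h1] <;> nlinarith
  have hrpow : (1 + r₀) ^ (-(3 : ℝ) / 2) = (b ^ 3)⁻¹ := by
    rw [hb_def, Real.sqrt_eq_rpow, ← Real.rpow_natCast ((1 + r₀) ^ ((1:ℝ)/2)) 3,
      ← Real.rpow_mul (by positivity), ← Real.rpow_neg (by positivity)]
    norm_num
  calc Norm.norm ((n : ℂ) / (2 * ρ) - (n : ℂ) / (2 * ρ₀))
      = n * (m * |z.im|) / (2 * Norm.norm ρ * a * Norm.norm (ρ + ρ₀)) := by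
        rw [hident, norm_div, habsnum]
        simp [norm_mul, habsρ₀]
    _ ≤ n * (m * |z.im|) / (2 * a * a * a) := by
        gcongr <;> positivity
    _ ≤ n * (m * |z.im|) / (2 * (s * b) * (s * b) * (s * b)) := by
        gcongr <;> positivity
    _ = (n * m / (2 * s ^ 3)) * |z.im| * (b ^ 3)⁻¹ := by
        field_simp
    _ = (n * m / (2 * s ^ 3)) * |z.im| * (1 + r₀) ^ (-(3 : ℝ) / 2) := by rw [hrpow]

/-- Estimate (5.33) of the paper: along `Z₂ = {Re z = −1, |Im z| ≤ 1}`, with `mⱼ = nⱼ/cⱼ`,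
`ρⱼ(z)` the root with positive imaginary part of `ρ² + r₀ = mⱼ z` and
`κ(z) = n₂/(2ρ₂(z)) − n₁/(2ρ₁(z))` (so that `ρⱼ(−1) = i√(r₀+mⱼ)`), there is a constant
`C > 0` depending only on `c₁, c₂, n₁, n₂` such that
`|κ(z) − κ(−1)| ≤ C |Im z| (1+r₀)^{−3/2}` for all `r₀ ≥ 0` and all such `z`. -/
theorem stmt_15 (c₁ c₂ n₁ n₂ : ℝ) (hc₁ : 0 < c₁) (hc₂ : 0 < c₂) (hn₁ : 0 < n₁) (hn₂ : 0 < n₂) :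
    ∃ C : ℝ, 0 < C ∧
      ∀ r₀ : ℝ, 0 ≤ r₀ → ∀ z : ℂ, z.re = -1 → |z.im| ≤ 1 →
        ∀ ρ₁ ρ₂ : ℂ, 0 < ρ₁.im → 0 < ρ₂.im →
          ρ₁ ^ 2 + (r₀ : ℂ) = ((n₁ / c₁ : ℝ) : ℂ) * z →
          ρ₂ ^ 2 + (r₀ : ℂ) = ((n₂ / c₂ : ℝ) : ℂ) * z →
          Norm.norm
              (((n₂ : ℂ) / (2 * ρ₂) - (n₁ : ℂ) / (2 * ρ₁)) -
                ((n₂ : ℂ) / (2 * (Complex.I * (Real.sqrt (r₀ + n₂ / c₂) : ℝ))) -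
                  (n₁ : ℂ) / (2 * (Complex.I * (Real.sqrt (r₀ + n₁ / c₁) : ℝ))))) ≤
            C * |z.im| * (1 + r₀) ^ (-(3 : ℝ) / 2) := by
  set m₁ := n₁ / c₁ with hm₁def
  set m₂ := n₂ / c₂ with hm₂def
  have hm₁ : 0 < m₁ := by positivity
  have hm₂ : 0 < m₂ := by positivity
  set K₁ := n₁ * m₁ / (2 * (Real.sqrt (min 1 m₁)) ^ 3) with hK₁
  set K₂ := n₂ * m₂ / (2 * (Real.sqrt (min 1 m₂)) ^ 3) with hK₂
  have hs₁ : 0 < Real.sqrt (min 1 m₁) := Real.sqrt_pos.mpr (by positivity)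
  have hs₂ : 0 < Real.sqrt (min 1 m₂) := Real.sqrt_pos.mpr (by positivity)
  refine ⟨K₁ + K₂, by positivity, ?_⟩
  intro r₀ hr z hre him ρ₁ ρ₂ hρ₁ hρ₂ heq₁ heq₂
  have h1 := key_est n₁ m₁ hn₁ hm₁ r₀ hr z hre ρ₁ hρ₁ heq₁
  have h2 := key_est n₂ m₂ hn₂ hm₂ r₀ hr z hre ρ₂ hρ₂ heq₂
  have hsplit : ((n₂ : ℂ) / (2 * ρ₂) - (n₁ : ℂ) / (2 * ρ₁)) -
      ((n₂ : ℂ) / (2 * (Complex.I * (Real.sqrt (r₀ + m₂) : ℝ))) -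
        (n₁ : ℂ) / (2 * (Complex.I * (Real.sqrt (r₀ + m₁) : ℝ)))) =
      ((n₂ : ℂ) / (2 * ρ₂) - (n₂ : ℂ) / (2 * (Complex.I * (Real.sqrt (r₀ + m₂) : ℝ)))) -
      ((n₁ : ℂ) / (2 * ρ₁) - (n₁ : ℂ) / (2 * (Complex.I * (Real.sqrt (r₀ + m₁) : ℝ)))) := by
    ring
  rw [hsplit]
  calc Norm.norm _ ≤
      Norm.norm ((n₂ : ℂ) / (2 * ρ₂) - (n₂ : ℂ) / (2 * (Complex.I * (Real.sqrt (r₀ + m₂) : ℝ)))) +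
      Norm.norm ((n₁ : ℂ) / (2 * ρ₁) - (n₁ : ℂ) / (2 * (Complex.I * (Real.sqrt (r₀ + m₁) : ℝ)))) := by
        exact (norm_sub_le _ _)
    _ ≤ K₂ * |z.im| * (1 + r₀) ^ (-(3 : ℝ) / 2) + K₁ * |z.im| * (1 + r₀) ^ (-(3 : ℝ) / 2) := by
        exact add_le_add h2 h1
    _ = (K₁ + K₂) * |z.im| * (1 + r₀) ^ (-(3 : ℝ) / 2) := by ring
end

section
/- Let c₁, c₂, n₁, n₂ > 0 be real numbers with (c₁ − c₂)(c₁n₁ − c₂n₂) < 0, and set m_j := n_j/c_j (j = 1,2). For r₀ ≥ 0 real and z ∈ ℂ with Re z = −1 and |Im z| ≤ 1, let ρ_j(z) be the unique complex number with Im ρ_j(z) > 0 and ρ_j(z)² + r₀ = m_j·z, and set κ(z) := n₂/(2ρ₂(z)) − n₁/(2ρ₁(z)). Then there exist constants γ₀ ∈ (0,1] and C > 0, depending only on c₁, c₂, n₁, n₂, such that for every r₀ ≥ 0 and every z with Re z = −1 and |Im z| ≤ γ₀ one has |Im κ(z)| ≥ C(1 + r₀)^{−1/2}. -/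
set_option maxHeartbeats 1000000

lemma aux_root (m n r₀ y : ℝ) (hm : 0 < m) (hn : 0 < n) (hr : 0 ≤ r₀)
    (ρ : ℂ) (hb : 0 < ρ.im)
    (h1 : ρ.re ^ 2 - ρ.im ^ 2 = -(r₀ + m)) (h2 : 2 * ρ.re * ρ.im = m * y) :
    |((n:ℂ)/(2*ρ)).im + n / (2 * Real.sqrt (r₀ + m))| ≤
      n / (4 * Real.sqrt (min 1 m)) * y ^ 2 / Real.sqrt (1 + r₀) := by
  set a := ρ.re with ha
  set b := ρ.im with hbdef
  set s := Real.sqrt (r₀ + m) with hs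
  have hrm : (0:ℝ) < r₀ + m := by linarith
  have hs0 : 0 < s := Real.sqrt_pos.mpr hrm
  have hs2 : s ^ 2 = r₀ + m := Real.sq_sqrt hrm.le
  have hb2 : b ^ 2 = s ^ 2 + a ^ 2 := by rw [hs2]; nlinarith [h1]
  have hbs : s ≤ b := by nlinarith
  have hbub : b * s ≤ s ^ 2 + a ^ 2 / 2 := by
    nlinarith [sq_nonneg (b*s - s^2 - a^2/2), sq_nonneg a, sq_nonneg (a^2)]
  have hD : (0:ℝ) < a ^ 2 + b ^ 2 := by nlinarith
  set D := a ^ 2 + b ^ 2 with hDdef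
  set T := D - b * s with hT
  have hT0 : 0 ≤ T := by rw [hT, hDdef]; nlinarith
  have hT2 : T ≤ 2 * a ^ 2 := by rw [hT, hDdef]; nlinarith
  have hIm : ((n:ℂ)/(2*ρ)).im = -(n * (2*b)) / (4 * D) := by
    rw [Complex.div_im]; simp [Complex.normSq_apply, hDdef]; ring
  have hXeq : ((n:ℂ)/(2*ρ)).im + n / (2 * s) = n * T / (2 * (s * D)) := by
    rw [hIm, hT]; field_simp; ring
  rw [hXeq, abs_of_nonneg (by positivity)]
  -- a² ≤ m² y² / (4 s²)
  have h2sq : (2 * a * b) ^ 2 = (m * y) ^ 2 := by rw [h2]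
  have ha2 : a ^ 2 * (4 * s ^ 2) ≤ m ^ 2 * y ^ 2 := by nlinarith [h2sq, hb2, sq_nonneg a, sq_nonneg (a^2)]
  have hsmu : Real.sqrt (min 1 m) * Real.sqrt (1 + r₀) ≤ s := by
    rw [hs, ← Real.sqrt_mul (by positivity)]
    apply Real.sqrt_le_sqrt
    rcases le_total (1:ℝ) m with h | h
    · simp [min_eq_left h]; nlinarith
    · simp [min_eq_right h]; nlinarith
  have hmu0 : (0:ℝ) < Real.sqrt (min 1 m) := Real.sqrt_pos.mpr (by positivity)
  have h1r : (0:ℝ) < Real.sqrt (1 + r₀) := Real.sqrt_pos.mpr (by linarith)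
  calc n * T / (2 * (s * D)) ≤ n * (2 * a ^ 2) / (2 * (s * s ^ 2)) := by
        gcongr
        nlinarith
    _ = n * a ^ 2 / s ^ 3 := by field_simp
    _ ≤ n * (m ^ 2 * y ^ 2 / (4 * s ^ 2)) / s ^ 3 := by
        gcongr
        rw [le_div_iff₀ (by positivity)]
        nlinarith [ha2]
    _ = n * m ^ 2 * y ^ 2 / (4 * s ^ 5) := by field_simp
    _ ≤ n * m ^ 2 * y ^ 2 / (4 * (m ^ 2 * (Real.sqrt (min 1 m) * Real.sqrt (1 + r₀)))) := by
        gcongr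
        have hs4 : m ^ 2 ≤ s ^ 4 := by nlinarith [hs2]
        calc m ^ 2 * (Real.sqrt (min 1 m) * Real.sqrt (1 + r₀)) ≤ s ^ 4 * s := by
              apply mul_le_mul hs4 hsmu (by positivity) (by positivity)
          _ = s ^ 5 := by ring
    _ = n / (4 * Real.sqrt (min 1 m)) * y ^ 2 / Real.sqrt (1 + r₀) := by
        field_simp


/-- Sign analysis of the numerator `P = (n₁²−n₂²)r₀ + n₁n₂(c₁n₁−c₂n₂)/(c₁c₂)`. -/
lemma keyP (c₁ c₂ n₁ n₂ : ℝ) (hc₁ : 0 < c₁) (hc₂ : 0 < c₂) (hn₁ : 0 < n₁) (hn₂ : 0 < n₂)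
    (h18 : (c₁ - c₂) * (c₁ * n₁ - c₂ * n₂) < 0) (r₀ : ℝ) (hr : 0 ≤ r₀) :
    0 < min (n₁ * n₂ * |c₁ * n₁ - c₂ * n₂| / (c₁ * c₂)) |n₁ ^ 2 - n₂ ^ 2| ∧
    min (n₁ * n₂ * |c₁ * n₁ - c₂ * n₂| / (c₁ * c₂)) |n₁ ^ 2 - n₂ ^ 2| * (1 + r₀) ≤
      |(n₁ ^ 2 - n₂ ^ 2) * r₀ + n₁ * n₂ * (c₁ * n₁ - c₂ * n₂) / (c₁ * c₂)| := by
  rcases lt_trichotomy c₁ c₂ with hc | hc | hc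
  · have h2 : 0 < c₁ * n₁ - c₂ * n₂ := by nlinarith
    have h3 : n₂ < n₁ := by nlinarith
    have hAval : n₁ * n₂ * |c₁ * n₁ - c₂ * n₂| / (c₁ * c₂)
        = n₁ * n₂ * (c₁ * n₁ - c₂ * n₂) / (c₁ * c₂) := by rw [abs_of_pos h2]
    have hBval : |n₁ ^ 2 - n₂ ^ 2| = n₁ ^ 2 - n₂ ^ 2 := abs_of_pos (by nlinarith)
    have hA0 : 0 < n₁ * n₂ * (c₁ * n₁ - c₂ * n₂) / (c₁ * c₂) :=
      div_pos (mul_pos (mul_pos hn₁ hn₂) h2) (by positivity)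
    rw [hAval, hBval]
    constructor
    · exact lt_min hA0 (by nlinarith)
    · have h4 := min_le_left (n₁ * n₂ * (c₁ * n₁ - c₂ * n₂) / (c₁ * c₂)) (n₁ ^ 2 - n₂ ^ 2)
      have h5 := min_le_right (n₁ * n₂ * (c₁ * n₁ - c₂ * n₂) / (c₁ * c₂)) (n₁ ^ 2 - n₂ ^ 2)
      have hP0 : 0 ≤ (n₁ ^ 2 - n₂ ^ 2) * r₀ + n₁ * n₂ * (c₁ * n₁ - c₂ * n₂) / (c₁ * c₂) := by
        have := mul_nonneg (show (0:ℝ) ≤ n₁ ^ 2 - n₂ ^ 2 by nlinarith) hr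
        linarith
      rw [abs_of_nonneg hP0]
      have h6 := mul_le_mul_of_nonneg_right h5 hr
      nlinarith
  · exfalso; rw [hc] at h18; nlinarith
  · have h2 : c₁ * n₁ - c₂ * n₂ < 0 := by nlinarith
    have h3 : n₁ < n₂ := by nlinarith
    have hAval : n₁ * n₂ * |c₁ * n₁ - c₂ * n₂| / (c₁ * c₂)
        = n₁ * n₂ * (c₂ * n₂ - c₁ * n₁) / (c₁ * c₂) := by rw [abs_of_neg h2]; ring_nf
    have hBval : |n₁ ^ 2 - n₂ ^ 2| = n₂ ^ 2 - n₁ ^ 2 := by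
      rw [abs_of_neg (by nlinarith : n₁ ^ 2 - n₂ ^ 2 < 0)]; ring
    have hA0 : 0 < n₁ * n₂ * (c₂ * n₂ - c₁ * n₁) / (c₁ * c₂) :=
      div_pos (mul_pos (mul_pos hn₁ hn₂) (by linarith)) (by positivity)
    rw [hAval, hBval]
    constructor
    · exact lt_min hA0 (by nlinarith)
    · have h4 := min_le_left (n₁ * n₂ * (c₂ * n₂ - c₁ * n₁) / (c₁ * c₂)) (n₂ ^ 2 - n₁ ^ 2)
      have h5 := min_le_right (n₁ * n₂ * (c₂ * n₂ - c₁ * n₁) / (c₁ * c₂)) (n₂ ^ 2 - n₁ ^ 2)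
      have hP0 : (n₁ ^ 2 - n₂ ^ 2) * r₀ + n₁ * n₂ * (c₁ * n₁ - c₂ * n₂) / (c₁ * c₂) ≤ 0 := by
        have : n₁ * n₂ * (c₁ * n₁ - c₂ * n₂) / (c₁ * c₂)
            = -(n₁ * n₂ * (c₂ * n₂ - c₁ * n₁) / (c₁ * c₂)) := by ring
        have := mul_nonneg (show (0:ℝ) ≤ n₂ ^ 2 - n₁ ^ 2 by nlinarith) hr
        linarith
      rw [abs_of_nonpos hP0]
      have : -((n₁ ^ 2 - n₂ ^ 2) * r₀ + n₁ * n₂ * (c₁ * n₁ - c₂ * n₂) / (c₁ * c₂))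
          = (n₂ ^ 2 - n₁ ^ 2) * r₀ + n₁ * n₂ * (c₂ * n₂ - c₁ * n₁) / (c₁ * c₂) := by ring
      rw [this]
      have h6 := mul_le_mul_of_nonneg_right h5 hr
      nlinarith


lemma aux_main (c₁ c₂ n₁ n₂ : ℝ) (hc₁ : 0 < c₁) (hc₂ : 0 < c₂) (hn₁ : 0 < n₁) (hn₂ : 0 < n₂)
    (hmin : 0 < min (n₁ * n₂ * |c₁ * n₁ - c₂ * n₂| / (c₁ * c₂)) |n₁ ^ 2 - n₂ ^ 2|)
    (hkey : ∀ r₀ : ℝ, 0 ≤ r₀ →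
      min (n₁ * n₂ * |c₁ * n₁ - c₂ * n₂| / (c₁ * c₂)) |n₁ ^ 2 - n₂ ^ 2| * (1 + r₀) ≤
        |(n₁ ^ 2 - n₂ ^ 2) * r₀ + n₁ * n₂ * (c₁ * n₁ - c₂ * n₂) / (c₁ * c₂)|)
    (r₀ : ℝ) (hr : 0 ≤ r₀) :
    min (n₁ * n₂ * |c₁ * n₁ - c₂ * n₂| / (c₁ * c₂)) |n₁ ^ 2 - n₂ ^ 2| /
      (2 * (n₁ + n₂) * (max 1 (max (n₁ / c₁) (n₂ / c₂)) *
        Real.sqrt (max 1 (max (n₁ / c₁) (n₂ / c₂))))) / Real.sqrt (1 + r₀)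
    ≤ |n₁ / (2 * Real.sqrt (r₀ + n₁ / c₁)) - n₂ / (2 * Real.sqrt (r₀ + n₂ / c₂))| := by
  have hm₁ : 0 < n₁ / c₁ := by positivity
  have hm₂ : 0 < n₂ / c₂ := by positivity
  obtain ⟨m₁, hm₁def⟩ : ∃ m₁, m₁ = n₁ / c₁ := ⟨_, rfl⟩
  obtain ⟨m₂, hm₂def⟩ : ∃ m₂, m₂ = n₂ / c₂ := ⟨_, rfl⟩
  rw [← hm₁def, ← hm₂def]
  have hm₁' : 0 < m₁ := by rw [hm₁def]; exact hm₁
  have hm₂' : 0 < m₂ := by rw [hm₂def]; exact hm₂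
  obtain ⟨M, hMdef⟩ : ∃ M, M = max 1 (max m₁ m₂) := ⟨_, rfl⟩
  rw [← hMdef]
  have hM1 : (1:ℝ) ≤ M := hMdef ▸ le_max_left _ _
  have hM0 : (0:ℝ) < M := by linarith
  have hMm₁ : m₁ ≤ M := hMdef ▸ le_trans (le_max_left _ _) (le_max_right _ _)
  have hMm₂ : m₂ ≤ M := hMdef ▸ le_trans (le_max_right _ _) (le_max_right _ _)
  obtain ⟨s₁, hs₁def⟩ : ∃ s₁, s₁ = Real.sqrt (r₀ + m₁) := ⟨_, rfl⟩
  obtain ⟨s₂, hs₂def⟩ : ∃ s₂, s₂ = Real.sqrt (r₀ + m₂) := ⟨_, rfl⟩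
  rw [← hs₁def, ← hs₂def]
  have hs₁0 : 0 < s₁ := hs₁def ▸ Real.sqrt_pos.mpr (by linarith)
  have hs₂0 : 0 < s₂ := hs₂def ▸ Real.sqrt_pos.mpr (by linarith)
  have hs₁2 : s₁ ^ 2 = r₀ + m₁ := hs₁def ▸ Real.sq_sqrt (by linarith)
  have hs₂2 : s₂ ^ 2 = r₀ + m₂ := hs₂def ▸ Real.sq_sqrt (by linarith)
  obtain ⟨u, hudef⟩ : ∃ u, u = Real.sqrt (1 + r₀) := ⟨_, rfl⟩
  rw [← hudef]
  have hu0 : 0 < u := hudef ▸ Real.sqrt_pos.mpr (by linarith)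
  have hu2 : u ^ 2 = 1 + r₀ := hudef ▸ Real.sq_sqrt (by linarith)
  obtain ⟨w, hwdef⟩ : ∃ w, w = Real.sqrt M := ⟨_, rfl⟩
  rw [← hwdef]
  have hw0 : 0 < w := hwdef ▸ Real.sqrt_pos.mpr hM0
  have hw2 : w ^ 2 = M := hwdef ▸ Real.sq_sqrt hM0.le
  -- s_j ≤ w * u
  have hs₁t : s₁ ≤ w * u := by
    rw [hs₁def, hwdef, hudef, ← Real.sqrt_mul hM0.le]
    apply Real.sqrt_le_sqrt
    have := mul_le_mul_of_nonneg_left hM1 hr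
    nlinarith
  have hs₂t : s₂ ≤ w * u := by
    rw [hs₂def, hwdef, hudef, ← Real.sqrt_mul hM0.le]
    apply Real.sqrt_le_sqrt
    have := mul_le_mul_of_nonneg_left hM1 hr
    nlinarith
  set mAB := min (n₁ * n₂ * |c₁ * n₁ - c₂ * n₂| / (c₁ * c₂)) |n₁ ^ 2 - n₂ ^ 2| with hmAB
  have hexpr : n₁ / (2 * s₁) - n₂ / (2 * s₂)
      = (n₁ ^ 2 * s₂ ^ 2 - n₂ ^ 2 * s₁ ^ 2) / (2 * (s₁ * s₂ * (n₁ * s₂ + n₂ * s₁))) := by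
    field_simp
    ring
  have hPval : n₁ ^ 2 * s₂ ^ 2 - n₂ ^ 2 * s₁ ^ 2
      = (n₁ ^ 2 - n₂ ^ 2) * r₀ + n₁ * n₂ * (c₁ * n₁ - c₂ * n₂) / (c₁ * c₂) := by
    rw [hs₁2, hs₂2, hm₁def, hm₂def]
    field_simp
    ring
  have hQ0 : 0 < n₁ * s₂ + n₂ * s₁ := by positivity
  rw [hexpr, abs_div, abs_of_pos (by positivity : (0:ℝ) < 2 * (s₁ * s₂ * (n₁ * s₂ + n₂ * s₁)))]
  have hPlb : mAB * (1 + r₀) ≤ |n₁ ^ 2 * s₂ ^ 2 - n₂ ^ 2 * s₁ ^ 2| := by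
    rw [hPval]; exact hkey r₀ hr
  calc mAB / (2 * (n₁ + n₂) * (M * w)) / u
      = mAB * (1 + r₀) / (2 * ((n₁ + n₂) * (M * (1 + r₀) * (w * u)))) := by
        rw [← hu2]
        field_simp
    _ ≤ |n₁ ^ 2 * s₂ ^ 2 - n₂ ^ 2 * s₁ ^ 2| / (2 * (s₁ * s₂ * (n₁ * s₂ + n₂ * s₁))) := by
        apply div_le_div₀ (abs_nonneg _) hPlb (by positivity)
        have hQt : n₁ * s₂ + n₂ * s₁ ≤ (n₁ + n₂) * (w * u) := by
          have e1 := mul_le_mul_of_nonneg_left hs₂t hn₁.le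
          have e2 := mul_le_mul_of_nonneg_left hs₁t hn₂.le
          linarith
        have h6 : s₁ * s₂ * (n₁ * s₂ + n₂ * s₁) ≤ (w * u) * (w * u) * ((n₁ + n₂) * (w * u)) := by
          apply mul_le_mul _ hQt hQ0.le (by positivity)
          exact mul_le_mul hs₁t hs₂t hs₂0.le (by positivity)
        have h7 : (w * u) * (w * u) * ((n₁ + n₂) * (w * u))
            = (n₁ + n₂) * (M * (1 + r₀) * (w * u)) := by
          rw [← hw2, ← hu2]; ring
        linarith



/-- Estimate (5.35) of the paper: under condition (1.8), `(c₁−c₂)(c₁n₁−c₂n₂) < 0`, with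
`mⱼ = nⱼ/cⱼ`, `ρⱼ(z)` the root with positive imaginary part of `ρ² + r₀ = mⱼ z` and
`κ(z) = n₂/(2ρ₂(z)) − n₁/(2ρ₁(z))`, there are constants `γ₀ ∈ (0,1]` and `C > 0`,
depending only on `c₁, c₂, n₁, n₂`, such that `|Im κ(z)| ≥ C (1+r₀)^{−1/2}` for every
`r₀ ≥ 0` and every `z` with `Re z = −1`, `|Im z| ≤ γ₀`. -/
theorem stmt_16 (c₁ c₂ n₁ n₂ : ℝ) (hc₁ : 0 < c₁) (hc₂ : 0 < c₂) (hn₁ : 0 < n₁) (hn₂ : 0 < n₂)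
    (h18 : (c₁ - c₂) * (c₁ * n₁ - c₂ * n₂) < 0) :
    ∃ γ₀ C : ℝ, 0 < γ₀ ∧ γ₀ ≤ 1 ∧ 0 < C ∧
      ∀ r₀ : ℝ, 0 ≤ r₀ → ∀ z : ℂ, z.re = -1 → |z.im| ≤ γ₀ →
        ∀ ρ₁ ρ₂ : ℂ, 0 < ρ₁.im → 0 < ρ₂.im →
          ρ₁ ^ 2 + (r₀ : ℂ) = ((n₁ / c₁ : ℝ) : ℂ) * z →
          ρ₂ ^ 2 + (r₀ : ℂ) = ((n₂ / c₂ : ℝ) : ℂ) * z →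
          C * (1 + r₀) ^ (-(1 : ℝ) / 2) ≤
            |((n₂ : ℂ) / (2 * ρ₂) - (n₁ : ℂ) / (2 * ρ₁)).im| := by
  have hm₁ : 0 < n₁ / c₁ := by positivity
  have hm₂ : 0 < n₂ / c₂ := by positivity
  have hmin := (keyP c₁ c₂ n₁ n₂ hc₁ hc₂ hn₁ hn₂ h18 0 le_rfl).1
  have hkey : ∀ r₀ : ℝ, 0 ≤ r₀ →
      min (n₁ * n₂ * |c₁ * n₁ - c₂ * n₂| / (c₁ * c₂)) |n₁ ^ 2 - n₂ ^ 2| * (1 + r₀) ≤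
        |(n₁ ^ 2 - n₂ ^ 2) * r₀ + n₁ * n₂ * (c₁ * n₁ - c₂ * n₂) / (c₁ * c₂)| :=
    fun r₀ hr => (keyP c₁ c₂ n₁ n₂ hc₁ hc₂ hn₁ hn₂ h18 r₀ hr).2
  set M := max 1 (max (n₁ / c₁) (n₂ / c₂)) with hM
  have hM0 : (0:ℝ) < M := lt_of_lt_of_le one_pos (le_max_left _ _)
  set c₀ := min (n₁ * n₂ * |c₁ * n₁ - c₂ * n₂| / (c₁ * c₂)) |n₁ ^ 2 - n₂ ^ 2| /
      (2 * (n₁ + n₂) * (M * Real.sqrt M)) with hc₀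
  have hc₀0 : 0 < c₀ := by
    apply div_pos hmin
    have : 0 < Real.sqrt M := Real.sqrt_pos.mpr hM0
    positivity
  set K := n₁ / (4 * Real.sqrt (min 1 (n₁ / c₁))) + n₂ / (4 * Real.sqrt (min 1 (n₂ / c₂))) with hK
  have hK1 : 0 < n₁ / (4 * Real.sqrt (min 1 (n₁ / c₁))) := by
    have : 0 < Real.sqrt (min 1 (n₁ / c₁)) := Real.sqrt_pos.mpr (lt_min one_pos hm₁)
    positivity
  have hK2 : 0 < n₂ / (4 * Real.sqrt (min 1 (n₂ / c₂))) := by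
    have : 0 < Real.sqrt (min 1 (n₂ / c₂)) := Real.sqrt_pos.mpr (lt_min one_pos hm₂)
    positivity
  have hK0 : 0 < K := by rw [hK]; linarith
  refine ⟨min 1 (Real.sqrt (c₀ / (2 * K))), c₀ / 2, ?_, min_le_left _ _, by linarith, ?_⟩
  · exact lt_min one_pos (Real.sqrt_pos.mpr (by positivity))
  intro r₀ hr z hzre hzim ρ₁ ρ₂ hb₁ hb₂ hρ₁ hρ₂
  -- real/imaginary parts of the root equations
  have hre₁ := congrArg Complex.re hρ₁
  have him₁ := congrArg Complex.im hρ₁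
  simp [pow_two, Complex.mul_re, Complex.mul_im, hzre] at hre₁ him₁
  have hre₂ := congrArg Complex.re hρ₂
  have him₂ := congrArg Complex.im hρ₂
  simp [pow_two, Complex.mul_re, Complex.mul_im, hzre] at hre₂ him₂
  have h11 : ρ₁.re ^ 2 - ρ₁.im ^ 2 = -(r₀ + n₁ / c₁) := by nlinarith [hre₁]
  have h21 : 2 * ρ₁.re * ρ₁.im = (n₁ / c₁) * z.im := by nlinarith [him₁]
  have h12 : ρ₂.re ^ 2 - ρ₂.im ^ 2 = -(r₀ + n₂ / c₂) := by nlinarith [hre₂]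
  have h22 : 2 * ρ₂.re * ρ₂.im = (n₂ / c₂) * z.im := by nlinarith [him₂]
  -- error estimates
  have herr₁ := aux_root (n₁ / c₁) n₁ r₀ z.im hm₁ hn₁ hr ρ₁ hb₁ h11 h21
  have herr₂ := aux_root (n₂ / c₂) n₂ r₀ z.im hm₂ hn₂ hr ρ₂ hb₂ h12 h22
  -- main term estimate
  have hmain := aux_main c₁ c₂ n₁ n₂ hc₁ hc₂ hn₁ hn₂ hmin hkey r₀ hr
  rw [← hM, ← hc₀] at hmain
  have hu0 : (0:ℝ) < Real.sqrt (1 + r₀) := Real.sqrt_pos.mpr (by linarith)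
  -- y² bound
  have hy2 : z.im ^ 2 ≤ c₀ / (2 * K) := by
    have h1 : |z.im| ≤ Real.sqrt (c₀ / (2 * K)) := le_trans hzim (min_le_right _ _)
    have h2 : z.im ^ 2 = |z.im| ^ 2 := (sq_abs _).symm
    rw [h2]
    calc |z.im| ^ 2 ≤ Real.sqrt (c₀ / (2 * K)) ^ 2 := by
          apply pow_le_pow_left₀ (abs_nonneg _) h1
      _ = c₀ / (2 * K) := Real.sq_sqrt (by positivity)
  -- combine error bounds
  have herrsum : n₁ / (4 * Real.sqrt (min 1 (n₁ / c₁))) * z.im ^ 2 / Real.sqrt (1 + r₀)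
      + n₂ / (4 * Real.sqrt (min 1 (n₂ / c₂))) * z.im ^ 2 / Real.sqrt (1 + r₀)
      ≤ (c₀ / 2) / Real.sqrt (1 + r₀) := by
    rw [← add_div, div_le_div_iff₀ hu0 hu0]
    have : K * z.im ^ 2 ≤ K * (c₀ / (2 * K)) := by
      apply mul_le_mul_of_nonneg_left hy2 hK0.le
    have hKC : K * (c₀ / (2 * K)) = c₀ / 2 := by field_simp
    rw [hK] at this
    nlinarith [hu0]
  -- triangle inequality assembly
  set I₁ := ((n₁ : ℂ) / (2 * ρ₁)).im with hI₁
  set I₂ := ((n₂ : ℂ) / (2 * ρ₂)).im with hI₂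
  have hsub : ((n₂ : ℂ) / (2 * ρ₂) - (n₁ : ℂ) / (2 * ρ₁)).im = I₂ - I₁ := by
    rw [Complex.sub_im]
  rw [hsub]
  set s₁ := Real.sqrt (r₀ + n₁ / c₁) with hs₁
  set s₂ := Real.sqrt (r₀ + n₂ / c₂) with hs₂
  have hE : n₁ / (2 * s₁) - n₂ / (2 * s₂)
      = (I₂ - I₁) + (I₁ + n₁ / (2 * s₁)) - (I₂ + n₂ / (2 * s₂)) := by ring
  have htri : |n₁ / (2 * s₁) - n₂ / (2 * s₂)|
      ≤ |I₂ - I₁| + |I₁ + n₁ / (2 * s₁)| + |I₂ + n₂ / (2 * s₂)| := by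
    rw [hE]
    calc |(I₂ - I₁) + (I₁ + n₁ / (2 * s₁)) - (I₂ + n₂ / (2 * s₂))|
        ≤ |(I₂ - I₁) + (I₁ + n₁ / (2 * s₁))| + |I₂ + n₂ / (2 * s₂)| := abs_sub _ _
      _ ≤ |I₂ - I₁| + |I₁ + n₁ / (2 * s₁)| + |I₂ + n₂ / (2 * s₂)| := by
          have := abs_add_le (I₂ - I₁) (I₁ + n₁ / (2 * s₁))
          linarith
  -- rpow conversion
  have hrpow : (1 + r₀) ^ (-(1 : ℝ) / 2) = (Real.sqrt (1 + r₀))⁻¹ := by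
    rw [Real.sqrt_eq_rpow, ← Real.rpow_neg (by linarith), neg_div]
  rw [hrpow]
  have : c₀ / 2 * (Real.sqrt (1 + r₀))⁻¹ = c₀ / Real.sqrt (1 + r₀) - (c₀ / 2) / Real.sqrt (1 + r₀) := by
    field_simp
    ring
  rw [this]
  linarith [hmain, herr₁, herr₂, htri, herrsum]
end

section
/- Let m > 0 and r₀ ≥ 0 be real numbers, let z ∈ ℂ with |Re z| ≤ 1, and let ρ ∈ ℂ satisfy Im ρ > 0 and ρ² + r₀ = m·z. Then |Im(z/ρ)| ≤ (2/m)·Im ρ + Im ρ/|ρ|². -/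
/-- The bound on `Im(z ρ⁻¹)` from the proof of Lemma 4.1 of the paper, stated as a fact
about complex numbers: if `m > 0`, `r₀ ≥ 0`, `|Re z| ≤ 1`, `Im ρ > 0` and `ρ² + r₀ = m z`,
then `|Im(z/ρ)| ≤ (2/m) Im ρ + Im ρ / |ρ|²`. -/
theorem stmt_17 (m r₀ : ℝ) (hm : 0 < m) (hr₀ : 0 ≤ r₀) (z ρ : ℂ)
    (hzre : |z.re| ≤ 1) (hρ : 0 < ρ.im) (heq : ρ ^ 2 + (r₀ : ℂ) = (m : ℂ) * z) :
    |(z / ρ).im| ≤ (2 / m) * ρ.im + ρ.im / ‖ρ‖ ^ 2 := by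
  have hρ0 : ρ ≠ 0 := fun h => by simp [h] at hρ
  have hs : 0 < Complex.normSq ρ := Complex.normSq_pos.mpr hρ0
  set s := Complex.normSq ρ with hsdef
  have hsval : s = ρ.re ^ 2 + ρ.im ^ 2 := by
    rw [hsdef, Complex.normSq_apply]; ring
  have hre : ρ.re ^ 2 - ρ.im ^ 2 + r₀ = m * z.re := by
    have h := congrArg Complex.re heq
    simp [Complex.mul_re, pow_two] at h
    linarith [h]
  have him' : 2 * ρ.re * ρ.im = m * z.im := by
    have h := congrArg Complex.im heq
    simp [Complex.mul_im, pow_two] at h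
    linarith [h]
  have himeq : (z / ρ).im = ρ.im * (s - r₀) / (m * s) := by
    rw [Complex.div_im, ← hsdef]
    rw [eq_div_iff (by positivity)]
    field_simp
    rw [hsval]
    linear_combination ρ.im * hre - ρ.re * him'
  have habs2 : ‖ρ‖ ^ 2 = s := Complex.sq_norm ρ
  rw [himeq, habs2]
  have hr₀le : r₀ ≤ m + s := by
    have : z.re ≤ 1 := (abs_le.mp hzre).2
    nlinarith [hsval, hre, sq_nonneg ρ.re]
  have habs : |ρ.im * (s - r₀)| ≤ ρ.im * (s + m) := by
    rw [abs_mul, abs_of_pos hρ]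
    have : |s - r₀| ≤ s + m := by
      rw [abs_le]; constructor <;> nlinarith
    nlinarith
  rw [abs_div, abs_of_pos (by positivity : (0:ℝ) < m * s)]
  rw [div_le_iff₀ (by positivity)]
  have hrhs : (2 / m * ρ.im + ρ.im / s) * (m * s) = ρ.im * (2 * s + m) := by
    field_simp
  rw [hrhs]
  nlinarith [habs, mul_pos hρ hs]
end

section
/- Let c₁, c₂, n₁, n₂ > 0 be real numbers with (c₁ − c₂)(c₁n₁ − c₂n₂) > 0, and set m_j := n_j/c_j (j = 1,2). Let r₀ ≥ 0 be real, let z ∈ ℂ with Re z = −1 and |Im z| ≤ 1, and let ρ₁, ρ₂ ∈ ℂ satisfy Im ρ_j > 0 and ρ_j² + r₀ = m_j·z for j = 1,2. Then there is a constant C > 0 depending only on c₁, c₂, n₁, n₂ (not on r₀ or z) such that |c₁ρ₁ − c₂ρ₂| ≥ C(1 + r₀)^{1/2}. -/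
set_option maxHeartbeats 1600000 in
/-- The lower bound `|c₁ρ₁ − c₂ρ₂| ≥ C ⟨ξ'⟩` for `z ∈ Z₂` underlying estimate (5.12) in
Case 2 of Section 5 of the paper, under condition (1.7): `(c₁−c₂)(c₁n₁−c₂n₂) > 0`. Here
`ρⱼ` is the root with positive imaginary part of `ρ² + r₀ = mⱼ z`, `mⱼ = nⱼ/cⱼ`, and the
constant `C > 0` depends only on `c₁, c₂, n₁, n₂` (not on `r₀` or `z`). -/
theorem stmt_19 (c₁ c₂ n₁ n₂ : ℝ) (hc₁ : 0 < c₁) (hc₂ : 0 < c₂) (hn₁ : 0 < n₁) (hn₂ : 0 < n₂)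
    (h17 : 0 < (c₁ - c₂) * (c₁ * n₁ - c₂ * n₂)) :
    ∃ C : ℝ, 0 < C ∧
      ∀ r₀ : ℝ, 0 ≤ r₀ → ∀ z : ℂ, z.re = -1 → |z.im| ≤ 1 →
        ∀ ρ₁ ρ₂ : ℂ, 0 < ρ₁.im → 0 < ρ₂.im →
          ρ₁ ^ 2 + (r₀ : ℂ) = ((n₁ / c₁ : ℝ) : ℂ) * z →
          ρ₂ ^ 2 + (r₀ : ℂ) = ((n₂ / c₂ : ℝ) : ℂ) * z →
          C * Real.sqrt (1 + r₀) ≤ ‖(c₁ : ℂ) * ρ₁ - (c₂ : ℂ) * ρ₂‖ := by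
  have hc₁' : (c₁ : ℂ) ≠ 0 := Complex.ofReal_ne_zero.mpr hc₁.ne'
  have hc₂' : (c₂ : ℂ) ≠ 0 := Complex.ofReal_ne_zero.mpr hc₂.ne'
  set k : ℝ := c₁ * n₁ - c₂ * n₂ with hkdef
  set d : ℝ := c₁ ^ 2 - c₂ ^ 2 with hddef
  have hdk : 0 < d * k := by
    have h1 : (0:ℝ) < c₁ + c₂ := by positivity
    have h2 : d * k = (c₁ + c₂) * ((c₁ - c₂) * k) := by rw [hddef]; ring
    rw [h2]; exact mul_pos h1 h17
  have hk0 : k ≠ 0 := by rintro h; rw [h, mul_zero] at hdk; exact lt_irrefl _ hdk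
  have hd0 : d ≠ 0 := by rintro h; rw [h, zero_mul] at hdk; exact lt_irrefl _ hdk
  set K : ℝ := c₁ * Real.sqrt (Real.sqrt 2 * (n₁ / c₁) + 1)
      + c₂ * Real.sqrt (Real.sqrt 2 * (n₂ / c₂) + 1) with hKdef
  have hKpos : 0 < K := by
    have h1 : (0:ℝ) < Real.sqrt 2 * (n₁ / c₁) + 1 := by positivity
    have h2 : (0:ℝ) < Real.sqrt 2 * (n₂ / c₂) + 1 := by positivity
    have := Real.sqrt_pos.mpr h1
    have := Real.sqrt_pos.mpr h2
    positivity
  have hmin : 0 < min |k| |d| := lt_min (abs_pos.mpr hk0) (abs_pos.mpr hd0)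
  refine ⟨min |k| |d| / K, div_pos hmin hKpos, ?_⟩
  intro r₀ hr₀ z hre him ρ₁ ρ₂ hρ₁ hρ₂ h1 h2
  set s : ℝ := Real.sqrt (1 + r₀) with hsdef
  have hspos : 0 < s := Real.sqrt_pos.mpr (by linarith)
  have hs2 : s * s = 1 + r₀ := Real.mul_self_sqrt (by linarith)
  -- the algebraic identity (5.6)
  have e1 : (c₁ : ℂ) * ρ₁ ^ 2 + c₁ * r₀ = n₁ * z := by
    have h1' := h1
    push_cast at h1'
    field_simp at h1'
    linear_combination h1'
  have e2 : (c₂ : ℂ) * ρ₂ ^ 2 + c₂ * r₀ = n₂ * z := by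
    have h2' := h2
    push_cast at h2'
    field_simp at h2'
    linear_combination h2'
  have hid : ((c₁ : ℂ) * ρ₁ - (c₂ : ℂ) * ρ₂) * ((c₁ : ℂ) * ρ₁ + (c₂ : ℂ) * ρ₂)
      = (k : ℂ) * z - (d : ℂ) * r₀ := by
    rw [hkdef, hddef]
    push_cast
    linear_combination (c₁ : ℂ) * e1 - (c₂ : ℂ) * e2
  -- lower bound for the numerator
  have hNre : ((k : ℂ) * z - (d : ℂ) * r₀).re = -k - d * r₀ := by
    simp [Complex.sub_re, Complex.mul_re, Complex.ofReal_re, Complex.ofReal_im, hre]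
  have hnum : min |k| |d| * (1 + r₀) ≤ ‖(k : ℂ) * z - (d : ℂ) * r₀‖ := by
    have habs := Complex.abs_re_le_norm ((k : ℂ) * z - (d : ℂ) * r₀)
    rw [hNre] at habs
    have hkey : min |k| |d| * (1 + r₀) ≤ |(-k - d * r₀)| := by
      rcases lt_or_gt_of_ne hk0 with hneg | hpos
      · have hdneg : d < 0 := by
          by_contra h
          push_neg at h
          nlinarith
        have hmk : min |k| |d| ≤ -k := (min_le_left _ _).trans_eq (abs_of_neg hneg)
        have hmd : min |k| |d| ≤ -d := (min_le_right _ _).trans_eq (abs_of_neg hdneg)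
        rw [abs_of_nonneg (by nlinarith : (0:ℝ) ≤ -k - d * r₀)]
        nlinarith [mul_le_mul_of_nonneg_right hmd hr₀]
      · have hdpos : 0 < d := by
          by_contra h
          push_neg at h
          nlinarith
        have hmk : min |k| |d| ≤ k := (min_le_left _ _).trans_eq (abs_of_pos hpos)
        have hmd : min |k| |d| ≤ d := (min_le_right _ _).trans_eq (abs_of_pos hdpos)
        rw [abs_of_nonpos (by nlinarith : -k - d * r₀ ≤ 0)]
        nlinarith [mul_le_mul_of_nonneg_right hmd hr₀]
    linarith
  -- upper bound for |z|
  have habs_z : ‖z‖ ≤ Real.sqrt 2 := by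
    rw [Complex.norm_def, Complex.normSq_apply, hre]
    apply Real.sqrt_le_sqrt
    have := abs_le.mp him
    nlinarith
  -- bound for the roots
  have hρbound : ∀ m : ℝ, 0 < m → ∀ ρ : ℂ, ρ ^ 2 + (r₀ : ℂ) = ((m : ℝ) : ℂ) * z →
      ‖ρ‖ ≤ Real.sqrt (Real.sqrt 2 * m + 1) * s := by
    intro m hm ρ hρ
    have hsq : ‖ρ‖ ^ 2 = ‖(m : ℂ) * z - (r₀ : ℂ)‖ := by
      rw [← norm_pow, eq_sub_of_add_eq hρ]
    have hub : ‖(m : ℂ) * z - (r₀ : ℂ)‖ ≤ m * ‖z‖ + r₀ := by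
      calc ‖(m : ℂ) * z - (r₀ : ℂ)‖
          ≤ ‖(m : ℂ) * z‖ + ‖(r₀ : ℂ)‖ := by
            simpa using norm_sub_le ((m : ℂ) * z) ((r₀ : ℂ))
        _ = m * ‖z‖ + r₀ := by
            rw [norm_mul, Complex.norm_real, Real.norm_eq_abs, Complex.norm_real, Real.norm_eq_abs, abs_of_pos hm,
              abs_of_nonneg hr₀]
    have hle : ‖ρ‖ ^ 2 ≤ (Real.sqrt 2 * m + 1) * (1 + r₀) := by
      have h2' : (1:ℝ) ≤ Real.sqrt 2 := by
        rw [show (1:ℝ) = Real.sqrt 1 by simp]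
        exact Real.sqrt_le_sqrt (by norm_num)
      have : m * ‖z‖ ≤ Real.sqrt 2 * m := by nlinarith [norm_nonneg z]
      nlinarith [mul_nonneg (mul_nonneg (Real.sqrt_nonneg 2) hm.le) hr₀]
    calc ‖ρ‖ = Real.sqrt (‖ρ‖ ^ 2) := by
          rw [Real.sqrt_sq (norm_nonneg ρ)]
      _ ≤ Real.sqrt ((Real.sqrt 2 * m + 1) * (1 + r₀)) := Real.sqrt_le_sqrt hle
      _ = Real.sqrt (Real.sqrt 2 * m + 1) * s := by
          rw [hsdef, Real.sqrt_mul (by positivity)]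
  have b1 : ‖ρ₁‖ ≤ Real.sqrt (Real.sqrt 2 * (n₁ / c₁) + 1) * s :=
    hρbound (n₁ / c₁) (div_pos hn₁ hc₁) ρ₁ h1
  have b2 : ‖ρ₂‖ ≤ Real.sqrt (Real.sqrt 2 * (n₂ / c₂) + 1) * s :=
    hρbound (n₂ / c₂) (div_pos hn₂ hc₂) ρ₂ h2
  -- bound for the denominator
  have hden : ‖(c₁ : ℂ) * ρ₁ + (c₂ : ℂ) * ρ₂‖ ≤ K * s := by
    calc ‖(c₁ : ℂ) * ρ₁ + (c₂ : ℂ) * ρ₂‖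
        ≤ ‖(c₁ : ℂ) * ρ₁‖ + ‖(c₂ : ℂ) * ρ₂‖ := by
          simpa using norm_add_le ((c₁ : ℂ) * ρ₁) ((c₂ : ℂ) * ρ₂)
      _ = c₁ * ‖ρ₁‖ + c₂ * ‖ρ₂‖ := by
          rw [norm_mul, norm_mul, Complex.norm_real, Real.norm_eq_abs, Complex.norm_real, Real.norm_eq_abs, abs_of_pos hc₁,
            abs_of_pos hc₂]
      _ ≤ K * s := by
          rw [hKdef]
          nlinarith [mul_le_mul_of_nonneg_left b1 hc₁.le, mul_le_mul_of_nonneg_left b2 hc₂.le]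
  -- combine
  have hA0 : 0 ≤ ‖(c₁ : ℂ) * ρ₁ - (c₂ : ℂ) * ρ₂‖ := norm_nonneg _
  have hAB : ‖(c₁ : ℂ) * ρ₁ - (c₂ : ℂ) * ρ₂‖
      * ‖(c₁ : ℂ) * ρ₁ + (c₂ : ℂ) * ρ₂‖
      = ‖(k : ℂ) * z - (d : ℂ) * r₀‖ := by
    rw [← norm_mul, hid]
  rw [div_mul_eq_mul_div, div_le_iff₀ hKpos]
  have hstep : min |k| |d| * s * s ≤ ‖(c₁ : ℂ) * ρ₁ - (c₂ : ℂ) * ρ₂‖ * K * s := by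
    have h5 : ‖(c₁ : ℂ) * ρ₁ - (c₂ : ℂ) * ρ₂‖
        * ‖(c₁ : ℂ) * ρ₁ + (c₂ : ℂ) * ρ₂‖
        ≤ ‖(c₁ : ℂ) * ρ₁ - (c₂ : ℂ) * ρ₂‖ * (K * s) :=
      mul_le_mul_of_nonneg_left hden hA0
    nlinarith
  have := le_of_mul_le_mul_right (by linarith [hstep] : min |k| |d| * s * s
      ≤ ‖(c₁ : ℂ) * ρ₁ - (c₂ : ℂ) * ρ₂‖ * K * s) hspos
  linarith
end
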